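/- Let n ≥ 3 and let s_0, s_1, …, s_n be vectors in ℝ^d. Then there is exactly one family of vectors b_0, b_1, …, b_n in ℝ^d satisfying the cyclic system b_{k−1} + 4 b_k + b_{k+1} = 6 s_k for all k = 0, 1, …, n, where indices are read modulo n+1. -/
import Mathlib


/-- Given n ≥ 3 and points s_0, …, s_n in ℝ^d, there is exactly one family of vectors
b_0, …, b_n satisfying the cyclic system b_{k−1} + 4 b_k + b_{k+1} = 6 s_k for all
k = 0, …, n, indices read modulo n+1. -/
theorem periodic_bspline_exists_unique (d n : ℕ) (hn : 3 ≤ n)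
    (s : Fin (n + 1) → EuclideanSpace ℝ (Fin d)) :
    ∃! b : Fin (n + 1) → EuclideanSpace ℝ (Fin d),
      ∀ k : Fin (n + 1), b (k - 1) + (4 : ℝ) • b k + b (k + 1) = (6 : ℝ) • s k := by
  let T : (Fin (n + 1) → EuclideanSpace ℝ (Fin d)) →ₗ[ℝ] (Fin (n + 1) → EuclideanSpace ℝ (Fin d)) :=
    { toFun := fun b k => b (k - 1) + (4 : ℝ) • b k + b (k + 1)
      map_add' := by
        intro x y; funext k
        simp only [Pi.add_apply, smul_add]
        abel
      map_smul' := by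
        intro c x; funext k
        simp only [Pi.smul_apply, RingHom.id_apply, smul_add, smul_comm c (4 : ℝ)] }
  have hinj : Function.Injective T := by
    rw [← LinearMap.ker_eq_bot, LinearMap.ker_eq_bot']
    intro b hb
    have hb' : ∀ k : Fin (n + 1), b (k - 1) + (4 : ℝ) • b k + b (k + 1) = 0 := fun k =>
      congrFun hb k
    -- pick k maximizing ‖b k‖
    obtain ⟨k₀, _, hk₀⟩ := Finset.exists_max_image Finset.univ (fun k => ‖b k‖)
      ⟨0, Finset.mem_univ 0⟩
    have hmax : ∀ k, ‖b k‖ ≤ ‖b k₀‖ := fun k => hk₀ k (Finset.mem_univ k)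
    have h0 : ‖b k₀‖ ≤ 0 := by
      have h4 : (4 : ℝ) • b k₀ = -(b (k₀ - 1) + b (k₀ + 1)) := by
        have := hb' k₀; linear_combination (norm := module) this
      have : (4 : ℝ) * ‖b k₀‖ ≤ 2 * ‖b k₀‖ := by
        calc (4 : ℝ) * ‖b k₀‖ = ‖(4 : ℝ) • b k₀‖ := by
              rw [norm_smul]; simp
          _ = ‖b (k₀ - 1) + b (k₀ + 1)‖ := by rw [h4, norm_neg]
          _ ≤ ‖b (k₀ - 1)‖ + ‖b (k₀ + 1)‖ := norm_add_le _ _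
          _ ≤ ‖b k₀‖ + ‖b k₀‖ := add_le_add (hmax _) (hmax _)
          _ = 2 * ‖b k₀‖ := by ring
      linarith
    funext k
    have : ‖b k‖ ≤ 0 := le_trans (hmax k) h0
    simpa using norm_le_zero_iff.mp this
  have hsurj : Function.Surjective T :=
    (LinearMap.injective_iff_surjective (f := T)).mp hinj
  obtain ⟨b, hbT⟩ := hsurj (fun k => (6 : ℝ) • s k)
  refine ⟨b, fun k => ?_, ?_⟩
  · simpa [T] using congrFun hbT k
  intro b' hb'
  apply hinj
  rw [hbT]
  funext k
  simpa [T] using hb' k
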